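/- Let p ∈ ℂ[X] be a Shabat polynomial of degree n ≥ 2 in Zapponi form, written p = aₙXⁿ + aₙ₋₁Xⁿ⁻¹ + ⋯ + a₀. Then aₙ₋₁ = 0, i.e., the coefficient of Xⁿ⁻¹ in p is zero. -/

import Mathlib

open Polynomial

private lemma sum_roots_eq_aux (q : Polynomial ℂ) (hq : q.natDegree ≠ 0) :
    q.roots.sum = - q.coeff (q.natDegree - 1) / q.leadingCoeff := by
  have hq0 : q ≠ 0 := fun h => hq (by simp [h])
  have hc : q.leadingCoeff ≠ 0 := leadingCoeff_ne_zero.2 hq0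
  set m := q * C q.leadingCoeff⁻¹ with hm
  have hmon : m.Monic := monic_mul_leadingCoeff_inv hq0
  have hroots : m.roots = q.roots := by
    rw [hm, mul_comm, roots_C_mul _ (inv_ne_zero hc)]
  have hdegm : m.natDegree = q.natDegree := by
    rw [hm, natDegree_mul_C (inv_ne_zero hc)]
  have hsum := Splits.nextCoeff_eq_neg_sum_roots_of_monic
    (IsAlgClosed.splits m) hmon
  rw [hroots] at hsum
  have hnc : m.nextCoeff = q.coeff (q.natDegree - 1) * q.leadingCoeff⁻¹ := by
    rw [nextCoeff_of_natDegree_pos (by rw [hdegm]; omega), hdegm, hm, coeff_mul_C]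
  rw [hnc] at hsum
  rw [neg_div, div_eq_mul_inv]
  linear_combination hsum

theorem shabat_zapponi_subleading_coeff_eq_zero
    (p : Polynomial ℂ) (n : ℕ) (hn : 2 ≤ n) (hdeg : p.natDegree = n)
    (hShabat : ∀ z : ℂ, (Polynomial.derivative p).eval z = 0 →
      p.eval z = 1 ∨ p.eval z = -1)
    (hwhite : ((p - 1).roots.toFinset.sum id) = 1)
    (hblack : ((p + 1).roots.toFinset.sum id) = -1) :
    p.coeff (n - 1) = 0 := by
  classical
  have hp0 : p ≠ 0 := fun h => by simp [h] at hdeg; omega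
  set a := p.leadingCoeff with ha_def
  have ha : a ≠ 0 := leadingCoeff_ne_zero.2 hp0
  set b := p.coeff (n - 1) with hb_def
  set q1 := p - 1 with hq1_def
  set q2 := p + 1 with hq2_def
  set d := derivative p with hd_def
  -- degrees
  have hq1deg : q1.natDegree = n := by
    rw [hq1_def, ← C_1, natDegree_sub_C, hdeg]
  have hq2deg : q2.natDegree = n := by
    rw [hq2_def, ← C_1, natDegree_add_C, hdeg]
  have hq1ne : q1 ≠ 0 := fun h => by rw [h] at hq1deg; simp at hq1deg; omega
  have hq2ne : q2 ≠ 0 := fun h => by rw [h] at hq2deg; simp at hq2deg; omega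
  -- coefficients of q1, q2
  have hcq1 : ∀ k, k ≠ 0 → q1.coeff k = p.coeff k := by
    intro k hk
    simp [hq1_def, coeff_one, hk]
  have hcq2 : ∀ k, k ≠ 0 → q2.coeff k = p.coeff k := by
    intro k hk
    simp [hq2_def, coeff_one, hk]
  have hq1lead : q1.leadingCoeff = a := by
    rw [leadingCoeff, hq1deg, hcq1 n (by omega), ha_def, leadingCoeff, hdeg]
  have hq2lead : q2.leadingCoeff = a := by
    rw [leadingCoeff, hq2deg, hcq2 n (by omega), ha_def, leadingCoeff, hdeg]
  -- derivative facts
  have hn0 : (n : ℂ) ≠ 0 := Nat.cast_ne_zero.2 (by omega)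
  have hcoefftop : d.coeff (n - 1) = a * n := by
    have e1 : n - 1 + 1 = n := by omega
    rw [hd_def, coeff_derivative, e1]
    have e2 : ((n - 1 : ℕ) : ℂ) + 1 = (n : ℂ) := by
      rw [Nat.cast_sub (by omega : 1 ≤ n)]; ring
    rw [e2, show p.coeff n = a from by rw [ha_def, leadingCoeff, hdeg]]
  have hdne : d ≠ 0 := fun h => by
    rw [h, coeff_zero] at hcoefftop
    exact (mul_ne_zero ha hn0) hcoefftop.symm
  have hddeg : d.natDegree = n - 1 := by
    have h1 : d.natDegree ≤ n - 1 := by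
      have := natDegree_derivative_le p
      rwa [hdeg] at this
    have h2 : n - 1 ≤ d.natDegree := le_natDegree_of_ne_zero (by
      rw [hcoefftop]
      exact mul_ne_zero ha (Nat.cast_ne_zero.2 (by omega)))
    omega
  have hdlead : d.leadingCoeff = a * n := by rw [leadingCoeff, hddeg, hcoefftop]
  have hdnext : d.coeff (n - 2) = b * ((n : ℂ) - 1) := by
    have e1 : n - 2 + 1 = n - 1 := by omega
    rw [hd_def, coeff_derivative, e1, ← hb_def]
    have e2 : ((n - 2 : ℕ) : ℂ) + 1 = (n : ℂ) - 1 := by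
      rw [Nat.cast_sub (by omega : 2 ≤ n)]; push_cast; ring
    rw [e2]
  -- the multiset identity
  have key : d.roots + (q1.roots.dedup + q2.roots.dedup) = q1.roots + q2.roots := by
    ext z
    simp only [Multiset.count_add, Multiset.count_dedup, count_roots]
    have hmem1 : z ∈ q1.roots ↔ q1.IsRoot z := by
      rw [mem_roots hq1ne]
    have hmem2 : z ∈ q2.roots ↔ q2.IsRoot z := by
      rw [mem_roots hq2ne]
    have hev1 : q1.eval z = p.eval z - 1 := by simp [hq1_def]
    have hev2 : q2.eval z = p.eval z + 1 := by simp [hq2_def]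
    have hd1 : d = derivative q1 := by simp [hd_def, hq1_def]
    have hd2 : d = derivative q2 := by simp [hd_def, hq2_def]
    by_cases h1 : q1.IsRoot z
    · have h2 : ¬ q2.IsRoot z := by
        intro h
        rw [IsRoot, hev2] at h
        rw [IsRoot, hev1] at h1
        have : (2:ℂ) = 0 := by linear_combination h - h1
        norm_num at this
      have hm1 : 1 ≤ q1.rootMultiplicity z := (rootMultiplicity_pos hq1ne).2 h1
      rw [if_pos (hmem1.2 h1), if_neg (fun h => h2 (hmem2.1 h)),
        rootMultiplicity_eq_zero h2, hd1, derivative_rootMultiplicity_of_root h1]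
      omega
    · by_cases h2 : q2.IsRoot z
      · have hm2 : 1 ≤ q2.rootMultiplicity z := (rootMultiplicity_pos hq2ne).2 h2
        rw [if_neg (fun h => h1 (hmem1.1 h)), if_pos (hmem2.2 h2),
          rootMultiplicity_eq_zero h1, hd2, derivative_rootMultiplicity_of_root h2]
        omega
      · have hdz : ¬ d.IsRoot z := by
          intro h
          rcases hShabat z h with hv | hv
          · exact h1 (by rw [IsRoot, hev1, hv]; ring)
          · exact h2 (by rw [IsRoot, hev2, hv]; ring)
        rw [if_neg (fun h => h1 (hmem1.1 h)), if_neg (fun h => h2 (hmem2.1 h)),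
          rootMultiplicity_eq_zero h1, rootMultiplicity_eq_zero h2,
          rootMultiplicity_eq_zero hdz]
  -- take sums
  have hsums := congrArg Multiset.sum key
  simp only [Multiset.sum_add] at hsums
  have hded1 : q1.roots.dedup.sum = 1 := by
    have : q1.roots.toFinset.sum id = q1.roots.dedup.sum := by
      simp [Finset.sum, Multiset.toFinset_val]
    rw [← this]; exact hwhite
  have hded2 : q2.roots.dedup.sum = -1 := by
    have : q2.roots.toFinset.sum id = q2.roots.dedup.sum := by
      simp [Finset.sum, Multiset.toFinset_val]
    rw [← this]; exact hblack
  have hs1 : q1.roots.sum = -b / a := by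
    rw [sum_roots_eq_aux q1 (by omega), hq1deg, hq1lead, hcq1 (n-1) (by omega), ← hb_def]
  have hs2 : q2.roots.sum = -b / a := by
    rw [sum_roots_eq_aux q2 (by omega), hq2deg, hq2lead, hcq2 (n-1) (by omega), ← hb_def]
  have hsd : d.roots.sum = -(b * ((n : ℂ) - 1)) / (a * n) := by
    rw [sum_roots_eq_aux d (by omega), hddeg, hdlead]
    rw [show n - 1 - 1 = n - 2 by omega, hdnext]
  rw [hded1, hded2, hs1, hs2, hsd] at hsums
  have hnp1 : (n : ℂ) + 1 ≠ 0 := by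
    have h' : ((n + 1 : ℕ) : ℂ) ≠ 0 := Nat.cast_ne_zero.2 (by omega)
    push_cast at h'
    exact h'
  field_simp at hsums
  have haux : a ^ 2 * (b * ((n : ℂ) + 1)) = 0 := by linear_combination a ^ 2 * hsums
  have : b * ((n:ℂ) + 1) = 0 := by
    rcases mul_eq_zero.1 haux with h | h
    · exact absurd h (pow_ne_zero 2 ha)
    · exact h
  rcases mul_eq_zero.1 this with h | h
  · exact h
  · exact absurd h hnp1
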